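/- For nonnegative integers ℓ ≤ m, the coefficient of x^{ℓ+m} in the polynomial (x+1)^{2ℓ}(x-1)^{2m}, namely Σ_{i=0}^{ℓ+m} (-1)^i C(2ℓ, ℓ+m-i) C(2m, i), equals (-1)^m (2ℓ)! (m-ℓ)! C(2m, ℓ+m) / (ℓ! · m!). -/

import Mathlib

open Finset

lemma q_absorb (n k : ℕ) :
    ((k : ℚ) + 1) * ((n + 1).choose (k + 1)) = ((n : ℚ) + 1) * (n.choose k) := by
  have := Nat.add_one_mul_choose_eq n k
  have h2 := congrArg (Nat.cast : ℕ → ℚ) this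
  push_cast at h2
  linarith
lemma q_right (n i : ℕ) :
    ((i : ℚ) + 1) * (n.choose (i + 1)) = ((n : ℚ) - i) * (n.choose i) := by
  rcases le_or_gt i n with hle | hlt
  · have := Nat.choose_succ_right_eq n i
    have h2 := congrArg (Nat.cast : ℕ → ℚ) this
    push_cast [Nat.cast_sub hle] at h2
    linarith
  · rw [Nat.choose_eq_zero_of_lt hlt, Nat.choose_eq_zero_of_lt (by omega)]
    push_cast
    ring
lemma q_up (n k : ℕ) :
    ((n : ℚ) + 1 - k) * ((n + 1).choose k) = ((n : ℚ) + 1) * (n.choose k) := by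
  rcases le_or_gt k (n + 1) with hle | hlt
  · have := Nat.choose_mul_succ_eq n k
    have h2 := congrArg (Nat.cast : ℕ → ℚ) this
    push_cast [Nat.cast_sub hle] at h2
    linarith
  · rw [Nat.choose_eq_zero_of_lt hlt, Nat.choose_eq_zero_of_lt (by omega)]
    push_cast
    ring
lemma q_pascal (n k : ℕ) :
    (((n + 1).choose (k + 1) : ℚ)) = (n.choose (k + 1) : ℚ) + (n.choose k : ℚ) := by
  have := Nat.choose_succ_succ n k
  have h2 := congrArg (Nat.cast : ℕ → ℚ) this
  push_cast at h2
  linarith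

lemma pt (ℓ m i k : ℕ) (hk : ℓ + m = i + k) :
    ((ℓ : ℚ) + m + 1) * ((-1 : ℚ) ^ i * ((2 * ℓ + 2).choose (k + 1) : ℚ) * ((2 * m).choose i : ℚ))
      - 2 * (2 * (ℓ : ℚ) + 1) * ((-1 : ℚ) ^ i * ((2 * ℓ).choose k : ℚ) * ((2 * m).choose i : ℚ))
    = (-((i : ℚ) + 1) * (-1 : ℚ) ^ (i + 1) * ((2 * ℓ + 1).choose k : ℚ) * ((2 * m).choose (i + 1) : ℚ))
      - (-(i : ℚ) * (-1 : ℚ) ^ i * ((2 * ℓ + 1).choose (k + 1) : ℚ) * ((2 * m).choose i : ℚ)) := by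
  have hm : (m : ℚ) = (i : ℚ) + k - ℓ := by
    have := congrArg (Nat.cast : ℕ → ℚ) hk
    push_cast at this
    linarith
  have R1 : (((2 * ℓ + 2).choose (k + 1) : ℚ))
      = ((2 * ℓ + 1).choose (k + 1) : ℚ) + ((2 * ℓ + 1).choose k : ℚ) := by
    have := q_pascal (2 * ℓ + 1) k
    norm_num at this ⊢
    convert this using 3
  have R2 : ((i : ℚ) + 1) * ((2 * m).choose (i + 1) : ℚ)
      = (2 * (m : ℚ) - i) * ((2 * m).choose i : ℚ) := by
    have := q_right (2 * m) i
    push_cast at this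
    linarith
  have R3 : (2 * (ℓ : ℚ) + 1 - k) * ((2 * ℓ + 1).choose k : ℚ)
      = (2 * (ℓ : ℚ) + 1) * ((2 * ℓ).choose k : ℚ) := by
    have := q_up (2 * ℓ) k
    push_cast at this
    linarith
  have R4 : ((k : ℚ) + 1) * ((2 * ℓ + 1).choose (k + 1) : ℚ)
      = (2 * (ℓ : ℚ) + 1) * ((2 * ℓ).choose k : ℚ) := by
    have := q_absorb (2 * ℓ) k
    push_cast at this
    linarith
  rw [hm] at R2 ⊢
  rw [pow_succ]
  linear_combination ((-1 : ℚ) ^ i * ((i : ℚ) + k + 1) * ((2 * m).choose i : ℚ)) * R1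
    - ((-1 : ℚ) ^ i * ((2 * ℓ + 1).choose k : ℚ)) * R2
    + ((-1 : ℚ) ^ i * ((2 * m).choose i : ℚ)) * R3
    + ((-1 : ℚ) ^ i * ((2 * m).choose i : ℚ)) * R4

lemma recur (ℓ m : ℕ) :
    ((ℓ : ℚ) + m + 1) * ∑ i ∈ Finset.range (ℓ + 1 + m + 1),
        ((-1 : ℚ) ^ i * (Nat.choose (2 * (ℓ + 1)) (ℓ + 1 + m - i) : ℚ) *
          (Nat.choose (2 * m) i : ℚ))
    = 2 * (2 * (ℓ : ℚ) + 1) * ∑ i ∈ Finset.range (ℓ + m + 1),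
        ((-1 : ℚ) ^ i * (Nat.choose (2 * ℓ) (ℓ + m - i) : ℚ) *
          (Nat.choose (2 * m) i : ℚ)) := by
  set G : ℕ → ℚ := fun j =>
    -(j : ℚ) * (-1 : ℚ) ^ j * ((2 * ℓ + 1).choose (ℓ + m + 1 - j) : ℚ) *
      ((2 * m).choose j : ℚ) with hG
  have key : ∀ i ∈ Finset.range (ℓ + m + 1),
      ((ℓ : ℚ) + m + 1) * ((-1 : ℚ) ^ i * (Nat.choose (2 * (ℓ + 1)) (ℓ + 1 + m - i) : ℚ) *
          (Nat.choose (2 * m) i : ℚ))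
        - 2 * (2 * (ℓ : ℚ) + 1) * ((-1 : ℚ) ^ i * (Nat.choose (2 * ℓ) (ℓ + m - i) : ℚ) *
          (Nat.choose (2 * m) i : ℚ))
      = G (i + 1) - G i := by
    intro i hi
    rw [Finset.mem_range] at hi
    have h1 : 2 * (ℓ + 1) = 2 * ℓ + 2 := by ring
    have h2 : ℓ + 1 + m - i = (ℓ + m - i) + 1 := by omega
    have h3 : ℓ + m + 1 - (i + 1) = ℓ + m - i := by omega
    have h4 : ℓ + m + 1 - i = (ℓ + m - i) + 1 := by omega
    simp only [hG, h1, h2, h3, h4]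
    push_cast
    exact pt ℓ m i (ℓ + m - i) (by omega)
  have tel : ∑ i ∈ Finset.range (ℓ + m + 1), (G (i + 1) - G i)
      = G (ℓ + m + 1) - G 0 := Finset.sum_range_sub G (ℓ + m + 1)
  have hsum : ((ℓ : ℚ) + m + 1) * ∑ i ∈ Finset.range (ℓ + m + 1),
        ((-1 : ℚ) ^ i * (Nat.choose (2 * (ℓ + 1)) (ℓ + 1 + m - i) : ℚ) *
          (Nat.choose (2 * m) i : ℚ))
      - 2 * (2 * (ℓ : ℚ) + 1) * ∑ i ∈ Finset.range (ℓ + m + 1),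
        ((-1 : ℚ) ^ i * (Nat.choose (2 * ℓ) (ℓ + m - i) : ℚ) *
          (Nat.choose (2 * m) i : ℚ))
      = G (ℓ + m + 1) - G 0 := by
    rw [← tel, Finset.mul_sum, Finset.mul_sum, ← Finset.sum_sub_distrib]
    exact Finset.sum_congr rfl key
  have hrange : ℓ + 1 + m + 1 = (ℓ + m + 1) + 1 := by omega
  rw [hrange, Finset.sum_range_succ]
  have hlast : ℓ + 1 + m - (ℓ + m + 1) = 0 := by omega
  have hGend : G (ℓ + m + 1)
      = -((ℓ : ℚ) + m + 1) * (-1 : ℚ) ^ (ℓ + m + 1) * ((2 * m).choose (ℓ + m + 1) : ℚ) := by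
    simp only [hG, Nat.sub_self, Nat.choose_zero_right]
    push_cast
    ring
  have hG0 : G 0 = 0 := by simp [hG]
  rw [hlast] at *
  simp only [Nat.choose_zero_right, Nat.cast_one] at *
  have := hsum
  rw [hGend, hG0] at this
  linarith [this]

lemma main : ∀ ℓ m : ℕ, ℓ ≤ m →
    ∑ i ∈ Finset.range (ℓ + m + 1),
        ((-1 : ℚ) ^ i * (Nat.choose (2 * ℓ) (ℓ + m - i) : ℚ) *
          (Nat.choose (2 * m) i : ℚ)) =
      (-1 : ℚ) ^ m * (Nat.factorial (2 * ℓ) : ℚ) * (Nat.factorial (m - ℓ) : ℚ) *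
        (Nat.choose (2 * m) (ℓ + m) : ℚ) /
        ((Nat.factorial ℓ : ℚ) * (Nat.factorial m : ℚ)) := by
  intro ℓ
  induction ℓ with
  | zero =>
    intro m h
    have hsum : ∑ i ∈ Finset.range (0 + m + 1),
        ((-1 : ℚ) ^ i * (Nat.choose (2 * 0) (0 + m - i) : ℚ) *
          (Nat.choose (2 * m) i : ℚ))
        = (-1 : ℚ) ^ m * ((2 * m).choose m : ℚ) := by
      rw [Finset.sum_eq_single m]
      · simp
      · intro i hi hne
        rw [Finset.mem_range] at hi
        have : 0 < m - i := by omega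
        rw [show (2 * 0 : ℕ) = 0 from rfl, show (0 + m - i : ℕ) = m - i from by omega]
        rcases Nat.exists_eq_add_of_lt this with ⟨c, hc⟩
        rw [show m - i = 0 + c + 1 from hc, Nat.choose_zero_succ]
        push_cast
        ring
      · intro hm
        exfalso
        exact hm (Finset.mem_range.mpr (by omega))
    rw [hsum]
    have hfm : (Nat.factorial m : ℚ) ≠ 0 := by positivity
    simp only [Nat.mul_zero, Nat.zero_add, Nat.sub_zero, Nat.factorial_zero, Nat.cast_one]
    field_simp
  | succ n ih =>
    intro m h
    have hn : n ≤ m := by omega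
    have hrec := recur n m
    have hih := ih m hn
    rw [hih] at hrec
    -- now solve for the sum
    have hne : ((n : ℚ) + m + 1) ≠ 0 := by positivity
    have goal_eq : ((n : ℚ) + m + 1) *
        ((-1 : ℚ) ^ m * (Nat.factorial (2 * (n + 1)) : ℚ) * (Nat.factorial (m - (n + 1)) : ℚ) *
          (Nat.choose (2 * m) (n + 1 + m) : ℚ) /
          ((Nat.factorial (n + 1) : ℚ) * (Nat.factorial m : ℚ)))
        = 2 * (2 * (n : ℚ) + 1) *
        ((-1 : ℚ) ^ m * (Nat.factorial (2 * n) : ℚ) * (Nat.factorial (m - n) : ℚ) *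
          (Nat.choose (2 * m) (n + m) : ℚ) /
          ((Nat.factorial n : ℚ) * (Nat.factorial m : ℚ))) := by
      have F1 : (Nat.factorial (2 * (n + 1)) : ℚ)
          = (2 * (n : ℚ) + 2) * (2 * (n : ℚ) + 1) * (Nat.factorial (2 * n) : ℚ) := by
        rw [show 2 * (n + 1) = (2 * n + 1) + 1 from by ring, Nat.factorial_succ,
          Nat.factorial_succ]
        push_cast
        ring
      have F2 : (Nat.factorial (n + 1) : ℚ) = ((n : ℚ) + 1) * (Nat.factorial n : ℚ) := by
        rw [Nat.factorial_succ]; push_cast; ring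
      have F3 : (Nat.factorial (m - n) : ℚ)
          = ((m : ℚ) - n) * (Nat.factorial (m - (n + 1)) : ℚ) := by
        rw [show m - n = (m - (n + 1)) + 1 from by omega, Nat.factorial_succ]
        have : ((m - (n + 1) : ℕ) : ℚ) = (m : ℚ) - n - 1 := by
          push_cast [Nat.cast_sub h]
          ring
        push_cast
        rw [this]
        ring
      have F4 : ((n : ℚ) + m + 1) * (Nat.choose (2 * m) (n + m + 1) : ℚ)
          = ((m : ℚ) - n) * (Nat.choose (2 * m) (n + m) : ℚ) := by
        have := q_right (2 * m) (n + m)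
        push_cast at this
        linarith
      rw [show n + 1 + m = n + m + 1 from by omega]
      rw [F1, F2, F3]
      have hfn : (Nat.factorial n : ℚ) ≠ 0 := by positivity
      have hfm : (Nat.factorial m : ℚ) ≠ 0 := by positivity
      have h5 : ((Nat.choose (2 * m) (n + m + 1) : ℕ) : ℚ)
          = ((m : ℚ) - n) * (Nat.choose (2 * m) (n + m) : ℚ) / ((n : ℚ) + m + 1) := by
        field_simp
        linarith [F4]
      rw [h5]
      field_simp
    calc ∑ i ∈ Finset.range (n + 1 + m + 1),
        ((-1 : ℚ) ^ i * (Nat.choose (2 * (n + 1)) (n + 1 + m - i) : ℚ) *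
          (Nat.choose (2 * m) i : ℚ))
        = (((n : ℚ) + m + 1) * ∑ i ∈ Finset.range (n + 1 + m + 1),
            ((-1 : ℚ) ^ i * (Nat.choose (2 * (n + 1)) (n + 1 + m - i) : ℚ) *
              (Nat.choose (2 * m) i : ℚ))) / ((n : ℚ) + m + 1) := by
          field_simp
      _ = _ := by
          rw [hrec, ← goal_eq]
          field_simp


/-- For `ℓ ≤ m`, the coefficient of `x^(ℓ+m)` in `(x+1)^(2ℓ) (x-1)^(2m)`:
`∑_{i=0}^{ℓ+m} (-1)^i C(2ℓ, ℓ+m-i) C(2m, i)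
  = (-1)^m (2ℓ)! (m-ℓ)! C(2m, ℓ+m) / (ℓ! m!)`. -/
theorem stmt5 (ℓ m : ℕ) (h : ℓ ≤ m) :
    ∑ i ∈ Finset.range (ℓ + m + 1),
        ((-1 : ℚ) ^ i * (Nat.choose (2 * ℓ) (ℓ + m - i) : ℚ) *
          (Nat.choose (2 * m) i : ℚ)) =
      (-1 : ℚ) ^ m * (Nat.factorial (2 * ℓ) : ℚ) * (Nat.factorial (m - ℓ) : ℚ) *
        (Nat.choose (2 * m) (ℓ + m) : ℚ) /
        ((Nat.factorial ℓ : ℚ) * (Nat.factorial m : ℚ)) :=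
  main ℓ m h
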